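/- Fix a real number β > -1 and a probability mass function (p_m)_{m≥1} on the positive integers such that Σ_{m≥1} p_m·C^m < ∞ for every C > 0. For k ≥ 1 and (x_1,...,x_k) ∈ [0,∞)^k set S_k(x) = Σ_{j=1}^{k} x_j·(j+β)/(2+β), and define h_0 = 1, h_k(x_1,...,x_k) = Σ_{m≥1} p_m·( S_k(x)^m − S_{k-1}(x)^m ), and f_k(x_1,...,x_k) = h_{k-1}(x_1,...,x_{k-1}) − h_k(x_1,...,x_k). Then for every k ≥ 1 the system of equations f_i(x_1,...,x_i) = x_i for i = 1,...,k has a unique solution (x_1*,...,x_k*) in [0,∞)^k, and every coordinate x_i* is strictly positive. -/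
import Mathlib


/-- `S_k(x) = Σ_{j=1}^{k} x_j (j+β)/(2+β)`. -/
noncomputable def Spart (β : ℝ) (x : ℕ → ℝ) (k : ℕ) : ℝ :=
  ∑ j ∈ Finset.Icc 1 k, x j * ((j : ℝ) + β) / (2 + β)

/-- `h_0 = 1` and `h_k(x) = Σ_m p_m (S_k(x)^m - S_{k-1}(x)^m)` for `k ≥ 1`. -/
noncomputable def hpart (β : ℝ) (p : ℕ → ℝ) (x : ℕ → ℝ) (k : ℕ) : ℝ :=
  if k = 0 then 1
  else ∑' m : ℕ, p m * ((Spart β x k) ^ m - (Spart β x (k - 1)) ^ m)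

/-- `f_k(x) = h_{k-1}(x) - h_k(x)` for `k ≥ 1`. -/
noncomputable def fpart (β : ℝ) (p : ℕ → ℝ) (x : ℕ → ℝ) (k : ℕ) : ℝ :=
  hpart β p x (k - 1) - hpart β p x k

namespace Stmt16Aux

/-- The generating function `g(s) = Σ_m p_m s^m`. -/
noncomputable def g (p : ℕ → ℝ) (s : ℝ) : ℝ := ∑' m : ℕ, p m * s ^ m

lemma spart_succ (β : ℝ) (x : ℕ → ℝ) (k : ℕ) :
    Spart β x (k + 1) = Spart β x k + x (k + 1) * (((k : ℝ) + 1) + β) / (2 + β) := by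
  unfold Spart
  rw [Finset.sum_Icc_succ_top (by omega : 1 ≤ k + 1)]
  push_cast
  ring

lemma spart_congr {β : ℝ} {x y : ℕ → ℝ} {k : ℕ}
    (h : ∀ j, 1 ≤ j → j ≤ k → x j = y j) : Spart β x k = Spart β y k := by
  unfold Spart
  refine Finset.sum_congr rfl fun j hj => ?_
  rw [Finset.mem_Icc] at hj
  rw [h j hj.1 hj.2]

lemma spart_nonneg {β : ℝ} (hβ : -1 < β) {x : ℕ → ℝ} {k : ℕ}
    (hx : ∀ j, 1 ≤ j → j ≤ k → 0 ≤ x j) : 0 ≤ Spart β x k := by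
  unfold Spart
  refine Finset.sum_nonneg fun j hj => ?_
  rw [Finset.mem_Icc] at hj
  have h1 : (0:ℝ) < (j : ℝ) + β := by
    have : (1:ℝ) ≤ (j : ℝ) := by exact_mod_cast hj.1
    linarith
  have h2 : (0:ℝ) < 2 + β := by linarith
  have := hx j hj.1 hj.2
  positivity

section gprops

variable {p : ℕ → ℝ}

lemma g_summable (hpnn : ∀ m, 0 ≤ p m)
    (hexp : ∀ C : ℝ, 0 < C → Summable (fun m : ℕ => p m * C ^ m))
    {s : ℝ} (hs : 0 ≤ s) : Summable (fun m : ℕ => p m * s ^ m) := by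
  refine Summable.of_nonneg_of_le
    (fun m => mul_nonneg (hpnn m) (pow_nonneg hs m))
    (fun m => mul_le_mul_of_nonneg_left (pow_le_pow_left₀ hs (by linarith) m) (hpnn m))
    (hexp (s + 1) (by linarith))

lemma g_zero (hp0 : p 0 = 0) : g p 0 = 0 := by
  unfold g
  have h : ∀ m : ℕ, p m * (0:ℝ) ^ m = 0 := by
    intro m
    cases m with
    | zero => simp [hp0]
    | succ n => simp
  rw [tsum_congr h, tsum_zero]

lemma g_mono (hpnn : ∀ m, 0 ≤ p m)
    (hexp : ∀ C : ℝ, 0 < C → Summable (fun m : ℕ => p m * C ^ m))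
    {s t : ℝ} (hs : 0 ≤ s) (hst : s ≤ t) : g p s ≤ g p t :=
  Summable.tsum_le_tsum
    (fun m => mul_le_mul_of_nonneg_left (pow_le_pow_left₀ hs hst m) (hpnn m))
    (g_summable hpnn hexp hs) (g_summable hpnn hexp (hs.trans hst))

lemma g_strictMono (hp0 : p 0 = 0) (hpnn : ∀ m, 0 ≤ p m)
    (hpsum : (∑' m : ℕ, p m) = 1)
    (hexp : ∀ C : ℝ, 0 < C → Summable (fun m : ℕ => p m * C ^ m))
    {s t : ℝ} (hs : 0 ≤ s) (hst : s < t) : g p s < g p t := by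
  obtain ⟨m₀, hm₀, hpm₀⟩ : ∃ m, m ≠ 0 ∧ 0 < p m := by
    by_contra h
    push_neg at h
    have hz : ∀ m, p m = 0 := by
      intro m
      cases m with
      | zero => exact hp0
      | succ n => exact le_antisymm (h (n+1) (by omega)) (hpnn (n+1))
    rw [tsum_congr hz, tsum_zero] at hpsum
    norm_num at hpsum
  have hS : Summable (fun m : ℕ => p m * s ^ m) := g_summable hpnn hexp hs
  have hT : Summable (fun m : ℕ => p m * t ^ m) := g_summable hpnn hexp (hs.trans hst.le)
  have key : g p t - g p s = ∑' m : ℕ, (p m * t ^ m - p m * s ^ m) :=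
    (Summable.tsum_sub hT hS).symm
  have hle : p m₀ * t ^ m₀ - p m₀ * s ^ m₀ ≤ ∑' m : ℕ, (p m * t ^ m - p m * s ^ m) :=
    Summable.le_tsum (hT.sub hS) m₀ fun m _ =>
      sub_nonneg.2 (mul_le_mul_of_nonneg_left (pow_le_pow_left₀ hs hst.le m) (hpnn m))
  have hpow : s ^ m₀ < t ^ m₀ := pow_lt_pow_left₀ hst hs hm₀
  nlinarith [hle, key, hpow, hpm₀]

lemma g_contOn (hpnn : ∀ m, 0 ≤ p m)
    (hexp : ∀ C : ℝ, 0 < C → Summable (fun m : ℕ => p m * C ^ m))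
    {R : ℝ} (hR : 0 ≤ R) : ContinuousOn (g p) (Set.Icc 0 R) := by
  unfold g
  refine continuousOn_tsum (u := fun m => p m * (R + 1) ^ m)
    (fun m => (continuous_const.mul (continuous_pow m)).continuousOn)
    (hexp (R + 1) (by linarith)) ?_
  intro m x hx
  rw [Set.mem_Icc] at hx
  rw [Real.norm_eq_abs, abs_mul, abs_of_nonneg (hpnn m), abs_pow,
    abs_of_nonneg hx.1]
  exact mul_le_mul_of_nonneg_left (pow_le_pow_left₀ hx.1 (by linarith [hx.2]) m) (hpnn m)

/-- The one-step map `t ↦ t + g(a + t c)` is strictly monotone on `[0,∞)`. -/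
lemma step_strictMono (hpnn : ∀ m, 0 ≤ p m)
    (hexp : ∀ C : ℝ, 0 < C → Summable (fun m : ℕ => p m * C ^ m))
    {a c : ℝ} (ha : 0 ≤ a) (hc : 0 < c) :
    StrictMonoOn (fun t => t + g p (a + t * c)) (Set.Ici 0) := by
  intro s hs t _ hst
  simp only [Set.mem_Ici] at hs
  have h1 : g p (a + s * c) ≤ g p (a + t * c) :=
    g_mono hpnn hexp (by nlinarith) (by nlinarith)
  simp only
  linarith

lemma step_exists (hpnn : ∀ m, 0 ≤ p m)
    (hexp : ∀ C : ℝ, 0 < C → Summable (fun m : ℕ => p m * C ^ m))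
    {a c K : ℝ} (ha : 0 ≤ a) (hc : 0 < c) (hK : g p a < K) :
    ∃ t : ℝ, 0 < t ∧ t + g p (a + t * c) = K := by
  set M := K - g p a with hMdef
  have hM0 : 0 < M := by simp only [hMdef]; linarith
  have hR : (0:ℝ) ≤ a + M * c := by nlinarith
  have hcont : ContinuousOn (fun t => t + g p (a + t * c)) (Set.Icc 0 M) := by
    refine ContinuousOn.add continuousOn_id ?_
    refine (g_contOn hpnn hexp hR).comp
      ((continuous_const.add (continuous_id.mul continuous_const)).continuousOn) ?_
    intro t ht
    rw [Set.mem_Icc] at ht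
    simp only [Set.mem_Icc]
    constructor
    · nlinarith [ht.1]
    · nlinarith [ht.2, ht.1]
  have hsub := intermediate_value_Icc hM0.le hcont
  have hF0 : (fun t => t + g p (a + t * c)) 0 = g p a := by simp
  have hKmem : K ∈ Set.Icc ((fun t => t + g p (a + t * c)) 0)
      ((fun t => t + g p (a + t * c)) M) := by
    rw [Set.mem_Icc, hF0]
    refine ⟨hK.le, ?_⟩
    have : g p a ≤ g p (a + M * c) := g_mono hpnn hexp ha (by nlinarith)
    simp only
    simp only [hMdef]
    linarith
  obtain ⟨t, ht, hFt⟩ := hsub hKmem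
  rw [Set.mem_Icc] at ht
  refine ⟨t, ?_, hFt⟩
  rcases eq_or_lt_of_le ht.1 with h | h
  · exfalso
    rw [← h] at hFt
    rw [hF0] at hFt
    linarith
  · exact h

end gprops

lemma hpart_congr {β : ℝ} {p : ℕ → ℝ} {x y : ℕ → ℝ} {i : ℕ}
    (h : ∀ j, 1 ≤ j → j ≤ i → x j = y j) : hpart β p x i = hpart β p y i := by
  unfold hpart
  rcases Nat.eq_zero_or_pos i with hi | hi
  · simp [hi]
  · rw [if_neg (by omega), if_neg (by omega)]
    rw [spart_congr h, spart_congr (fun j h1 h2 => h j h1 (by omega))]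

lemma fpart_congr {β : ℝ} {p : ℕ → ℝ} {x y : ℕ → ℝ} {i : ℕ}
    (h : ∀ j, 1 ≤ j → j ≤ i → x j = y j) : fpart β p x i = fpart β p y i := by
  unfold fpart
  rw [hpart_congr h, hpart_congr (fun j h1 h2 => h j h1 (by omega))]

lemma hpart_eq {β : ℝ} {p : ℕ → ℝ} (hβ : -1 < β) (hpnn : ∀ m, 0 ≤ p m)
    (hexp : ∀ C : ℝ, 0 < C → Summable (fun m : ℕ => p m * C ^ m))
    {x : ℕ → ℝ} {k : ℕ} (hk : 1 ≤ k)
    (hx : ∀ j, 1 ≤ j → j ≤ k → 0 ≤ x j) :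
    hpart β p x k = g p (Spart β x k) - g p (Spart β x (k - 1)) := by
  unfold hpart
  rw [if_neg (by omega)]
  have hS1 : 0 ≤ Spart β x k := spart_nonneg hβ hx
  have hS2 : 0 ≤ Spart β x (k - 1) :=
    spart_nonneg hβ (fun j h1 h2 => hx j h1 (by omega))
  have h1 : Summable (fun m : ℕ => p m * (Spart β x k) ^ m) := g_summable hpnn hexp hS1
  have h2 : Summable (fun m : ℕ => p m * (Spart β x (k - 1)) ^ m) := g_summable hpnn hexp hS2
  have : (fun m : ℕ => p m * ((Spart β x k) ^ m - (Spart β x (k - 1)) ^ m))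
      = fun m : ℕ => p m * (Spart β x k) ^ m - p m * (Spart β x (k - 1)) ^ m := by
    funext m; ring
  rw [this, Summable.tsum_sub h1 h2]
  rfl

lemma spart_zero (β : ℝ) (x : ℕ → ℝ) : Spart β x 0 = 0 := by
  unfold Spart
  simp

/-- For `i = 1`: `f_1(x) = 1 - g(S_1(x))`. -/
lemma fpart_one {β : ℝ} {p : ℕ → ℝ} (hβ : -1 < β) (hp0 : p 0 = 0)
    (hpnn : ∀ m, 0 ≤ p m)
    (hexp : ∀ C : ℝ, 0 < C → Summable (fun m : ℕ => p m * C ^ m))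
    {x : ℕ → ℝ} (hx : 0 ≤ x 1) :
    fpart β p x 1 = 1 - g p (Spart β x 1) := by
  unfold fpart
  have h1 : hpart β p x 0 = 1 := by unfold hpart; simp
  have h2 : hpart β p x 1 = g p (Spart β x 1) - g p (Spart β x 0) :=
    hpart_eq hβ hpnn hexp le_rfl (fun j hj1 hj2 => by
      have : j = 1 := by omega
      subst this; exact hx)
  rw [h1, h2, spart_zero, g_zero hp0]
  ring

/-- For `i ≥ 2`: `f_i(x) = 2 g(S_{i-1}) - g(S_{i-2}) - g(S_i)`. -/
lemma fpart_ge_two {β : ℝ} {p : ℕ → ℝ} (hβ : -1 < β) (hpnn : ∀ m, 0 ≤ p m)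
    (hexp : ∀ C : ℝ, 0 < C → Summable (fun m : ℕ => p m * C ^ m))
    {x : ℕ → ℝ} {i : ℕ} (hi : 2 ≤ i)
    (hx : ∀ j, 1 ≤ j → j ≤ i → 0 ≤ x j) :
    fpart β p x i = (2 * g p (Spart β x (i - 1)) - g p (Spart β x (i - 2)))
      - g p (Spart β x i) := by
  unfold fpart
  have h1 : hpart β p x (i - 1)
      = g p (Spart β x (i - 1)) - g p (Spart β x (i - 1 - 1)) :=
    hpart_eq hβ hpnn hexp (by omega) (fun j h1 h2 => hx j h1 (by omega))
  have h2 : hpart β p x i = g p (Spart β x i) - g p (Spart β x (i - 1)) :=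
    hpart_eq hβ hpnn hexp (by omega) hx
  have : i - 1 - 1 = i - 2 := by omega
  rw [h1, h2, this]
  ring

end Stmt16Aux

open Stmt16Aux in
/-- Section 5 of the paper: for every `k ≥ 1` the system
`f_i(x_1,…,x_i) = x_i`, `i = 1,…,k`, has a unique solution in `[0,∞)^k`,
and all its coordinates are strictly positive. -/
theorem stmt16 (β : ℝ) (hβ : -1 < β)
    (p : ℕ → ℝ) (hp0 : p 0 = 0) (hpnn : ∀ m, 0 ≤ p m)
    (hpsum : (∑' m : ℕ, p m) = 1)
    (hexp : ∀ C : ℝ, 0 < C → Summable (fun m : ℕ => p m * C ^ m)) :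
    ∀ k : ℕ, 1 ≤ k →
      ∃ xs : ℕ → ℝ,
        (∀ i : ℕ, 1 ≤ i → i ≤ k → 0 < xs i) ∧
        (∀ i : ℕ, 1 ≤ i → i ≤ k → fpart β p xs i = xs i) ∧
        (∀ ys : ℕ → ℝ, (∀ i : ℕ, 1 ≤ i → i ≤ k → 0 ≤ ys i) →
          (∀ i : ℕ, 1 ≤ i → i ≤ k → fpart β p ys i = ys i) →
          ∀ i : ℕ, 1 ≤ i → i ≤ k → ys i = xs i) := by
  have h2β : (0:ℝ) < 2 + β := by linarith
  intro k hk
  induction k, hk using Nat.le_induction with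
  | base =>
    -- k = 1 : solve `t + g(t c) = 1`
    set c : ℝ := ((0:ℝ) + 1 + β) / (2 + β) with hcdef
    have hc : 0 < c := by
      apply div_pos (by linarith) h2β
    obtain ⟨t, ht0, hteq⟩ := step_exists hpnn hexp (le_refl (0:ℝ)) hc
      (by rw [g_zero hp0]; norm_num : g p 0 < 1)
    set xs : ℕ → ℝ := fun i => if i = 1 then t else 0 with hxsdef
    have hxs1 : xs 1 = t := by simp [hxsdef]
    have hSxs : Spart β xs 1 = 0 + t * c := by
      have := spart_succ β xs 0
      rw [spart_zero] at this
      rw [this, hxs1]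
      push_cast
      ring
    refine ⟨xs, ?_, ?_, ?_⟩
    · intro i h1 h2
      have : i = 1 := by omega
      subst this
      rw [hxs1]; exact ht0
    · intro i h1 h2
      have : i = 1 := by omega
      subst this
      rw [fpart_one hβ hp0 hpnn hexp (by rw [hxs1]; exact ht0.le), hSxs, hxs1]
      linarith [hteq]
    · intro ys hysnn hysfix i h1 h2
      have : i = 1 := by omega
      subst this
      have hys1 : 0 ≤ ys 1 := hysnn 1 le_rfl le_rfl
      have hSys : Spart β ys 1 = 0 + ys 1 * c := by
        have := spart_succ β ys 0
        rw [spart_zero] at this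
        rw [this]
        push_cast
        ring
      have heq := hysfix 1 le_rfl le_rfl
      rw [fpart_one hβ hp0 hpnn hexp hys1, hSys] at heq
      have heqys : ys 1 + g p (0 + ys 1 * c) = 1 := by linarith
      have := (step_strictMono hpnn hexp (le_refl (0:ℝ)) hc).injOn
        (Set.mem_Ici.2 hys1) (Set.mem_Ici.2 ht0.le)
        (by show ys 1 + g p (0 + ys 1 * c) = t + g p (0 + t * c)
            rw [heqys, hteq])
      rw [this, hxs1]
  | succ k hk IH =>
    obtain ⟨xs, hpos, hfix, huniq⟩ := IH
    have hxsnn : ∀ j, 1 ≤ j → j ≤ k → 0 ≤ xs j := fun j h1 h2 => (hpos j h1 h2).le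
    set a : ℝ := Spart β xs k with hadef
    set a' : ℝ := Spart β xs (k - 1) with ha'def
    have ha : 0 ≤ a := spart_nonneg hβ hxsnn
    set c : ℝ := ((k : ℝ) + 1 + β) / (2 + β) with hcdef
    have hc : 0 < c := by
      apply div_pos ?_ h2β
      have : (0:ℝ) ≤ (k:ℝ) := Nat.cast_nonneg k
      linarith
    -- g a' < g a
    have hga'a : g p a' < g p a := by
      obtain ⟨j, rfl⟩ : ∃ j, k = j + 1 := ⟨k - 1, by omega⟩
      have hstep := spart_succ β xs j
      have hcj : (0:ℝ) < ((j:ℝ) + 1 + β) / (2 + β) := by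
        apply div_pos ?_ h2β
        have : (0:ℝ) ≤ (j:ℝ) := Nat.cast_nonneg j
        linarith
      have hxk : 0 < xs (j + 1) := hpos (j + 1) (by omega) le_rfl
      have ha'lt : a' < a := by
        rw [hadef, ha'def]
        simp only [Nat.add_sub_cancel]
        rw [hstep]
        have : 0 < xs (j + 1) * ((j:ℝ) + 1 + β) / (2 + β) := by
          rw [mul_div_assoc]
          exact mul_pos hxk hcj
        linarith
      have ha' : 0 ≤ a' := spart_nonneg hβ (fun j' h1 h2 => hxsnn j' h1 (by omega))
      exact g_strictMono hp0 hpnn hpsum hexp ha' ha'lt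
    set K : ℝ := 2 * g p a - g p a' with hKdef
    have hgaK : g p a < K := by rw [hKdef]; linarith
    obtain ⟨t, ht0, hteq⟩ := step_exists hpnn hexp ha hc hgaK
    set xs' : ℕ → ℝ := fun i => if i = k + 1 then t else xs i with hxs'def
    have hagree : ∀ j, 1 ≤ j → j ≤ k → xs' j = xs j := by
      intro j h1 h2
      simp only [hxs'def]
      rw [if_neg (by omega)]
    have hxs'top : xs' (k + 1) = t := by simp [hxs'def]
    have hS'eq : ∀ m, m ≤ k → Spart β xs' m = Spart β xs m := fun m hm =>
      spart_congr (fun j h1 h2 => hagree j h1 (by omega))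
    have hS'succ : Spart β xs' (k + 1) = a + t * c := by
      rw [spart_succ, hS'eq k le_rfl, hxs'top, hadef, hcdef]
      ring
    have hxs'nn : ∀ j, 1 ≤ j → j ≤ k + 1 → 0 ≤ xs' j := by
      intro j h1 h2
      rcases Nat.lt_or_ge j (k + 1) with h | h
      · rw [hagree j h1 (by omega)]; exact hxsnn j h1 (by omega)
      · have : j = k + 1 := by omega
        subst this
        rw [hxs'top]; exact ht0.le
    refine ⟨xs', ?_, ?_, ?_⟩
    · intro i h1 h2
      rcases Nat.lt_or_ge i (k + 1) with h | h
      · rw [hagree i h1 (by omega)]; exact hpos i h1 (by omega)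
      · have : i = k + 1 := by omega
        subst this
        rw [hxs'top]; exact ht0
    · intro i h1 h2
      rcases Nat.lt_or_ge i (k + 1) with h | h
      · rw [fpart_congr (fun j hj1 hj2 => hagree j hj1 (by omega)),
          hagree i h1 (by omega)]
        exact hfix i h1 (by omega)
      · have : i = k + 1 := by omega
        subst this
        rw [fpart_ge_two hβ hpnn hexp (by omega) hxs'nn]
        have e1 : k + 1 - 1 = k := by omega
        have e2 : k + 1 - 2 = k - 1 := by omega
        rw [e1, e2, hS'eq k le_rfl,
          spart_congr (fun j hj1 hj2 => hagree j hj1 (by omega)),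
          hS'succ, hxs'top, ← hadef, ← ha'def]
        linarith [hteq]
    · intro ys hysnn hysfix i h1 h2
      have hysk : ∀ j, 1 ≤ j → j ≤ k → ys j = xs j :=
        huniq ys (fun j hj1 hj2 => hysnn j hj1 (by omega))
          (fun j hj1 hj2 => hysfix j hj1 (by omega))
      rcases Nat.lt_or_ge i (k + 1) with h | h
      · rw [hysk i h1 (by omega), ← hagree i h1 (by omega)]
      · have : i = k + 1 := by omega
        subst this
        have hSysk : Spart β ys k = a :=
          (spart_congr (fun j hj1 hj2 => hysk j hj1 hj2)).trans rfl
        have hSysk' : Spart β ys (k - 1) = a' :=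
          (spart_congr (fun j hj1 hj2 => hysk j hj1 (by omega))).trans rfl
        have hSyssucc : Spart β ys (k + 1) = a + ys (k + 1) * c := by
          rw [spart_succ, hSysk, hcdef]
          ring
        have hfixtop := hysfix (k + 1) (by omega) le_rfl
        rw [fpart_ge_two hβ hpnn hexp (by omega) hysnn] at hfixtop
        have e1 : k + 1 - 1 = k := by omega
        have e2 : k + 1 - 2 = k - 1 := by omega
        rw [e1, e2, hSysk, hSysk', hSyssucc] at hfixtop
        have heqys : ys (k + 1) + g p (a + ys (k + 1) * c) = K := by
          rw [hKdef]; linarith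
        have hys1 : 0 ≤ ys (k + 1) := hysnn (k + 1) (by omega) le_rfl
        have := (step_strictMono hpnn hexp ha hc).injOn
          (Set.mem_Ici.2 hys1) (Set.mem_Ici.2 ht0.le)
          (by show ys (k + 1) + g p (a + ys (k + 1) * c) = t + g p (a + t * c)
              rw [heqys, hteq])
        rw [this, hxs'top]
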